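/- Let n ≥ 1 and let B ∈ ℝ^{n×n} be nonsingular and cyclic (minimal polynomial equals characteristic polynomial), with characteristic polynomial splitting over ℝ and every root of the minimal polynomial having multiplicity at most two in the minimal polynomial. Then for any ξ, η ∈ ℝⁿ with det[ξ, Bξ, B²ξ, …, B^{n−1}ξ] ≠ 0 and det[η, Bη, B²η, …, B^{n−1}η] ≠ 0, the state ξ can be steered to the state η in the system x(k+1) = (I + u(k)B)x(k); that is, the system is controllable on the complement of the set {ξ : det[ξ, Bξ, …, B^{n−1}ξ] = 0}. -/

import Mathlib

open Matrix MeasureTheory Polynomial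
open scoped Classical

/-- The product `(I + u(l-1)B) ⋯ (I + u(1)B)(I + u(0)B)`. -/
noncomputable def prodCtrl {n : ℕ} (B : Matrix (Fin n) (Fin n) ℝ) (l : ℕ) (u : ℕ → ℝ) :
    Matrix (Fin n) (Fin n) ℝ :=
  ((List.range l).reverse.map fun k => (1 : Matrix (Fin n) (Fin n) ℝ) + u k • B).prod

/-- `ξ` can be steered to `η` in the system `x(k+1) = (I + u(k)B) x(k)`. -/
noncomputable def steers {n : ℕ} (B : Matrix (Fin n) (Fin n) ℝ) (ξ η : Fin n → ℝ) : Prop :=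
  ∃ l : ℕ, 1 ≤ l ∧ ∃ u : ℕ → ℝ, (prodCtrl B l u).mulVec ξ = η

/-- Near-controllability: outside two Lebesgue-null sets, any state can be steered to any state. -/
noncomputable def nearlyControllable {n : ℕ} (B : Matrix (Fin n) (Fin n) ℝ) : Prop :=
  ∃ E F : Set (Fin n → ℝ), volume E = 0 ∧ volume F = 0 ∧
    ∀ ξ ∉ E, ∀ η ∉ F, steers B ξ η

/-- The matrix `[ξ, Bξ, B²ξ, …, B^{n-1}ξ]`. -/
noncomputable def ctrlMat {n : ℕ} (B : Matrix (Fin n) (Fin n) ℝ) (ξ : Fin n → ℝ) :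
    Matrix (Fin n) (Fin n) ℝ :=
  Matrix.of fun i j => (B ^ (j : ℕ)).mulVec ξ i

/-- The `N × N` Jordan block with eigenvalue `lam`. -/
def jordanBlock (N : ℕ) (lam : ℝ) : Matrix (Fin N) (Fin N) ℝ :=
  Matrix.of fun i j => if i = j then lam else if (j : ℕ) = (i : ℕ) + 1 then 1 else 0

/-- Block-diagonal Jordan matrix: `r` two-dimensional Jordan blocks with eigenvalues
`lam 0, …, lam (r-1)` followed by `1 × 1` blocks `lam r, …, lam (m-1)` (so `n = m + r`). -/
def pairJordan (n r : ℕ) (lam : ℕ → ℝ) : Matrix (Fin n) (Fin n) ℝ :=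
  Matrix.of fun i j =>
    if (i : ℕ) = (j : ℕ) then
      (if (i : ℕ) < 2 * r then lam ((i : ℕ) / 2) else lam ((i : ℕ) - r))
    else if (j : ℕ) = (i : ℕ) + 1 ∧ (i : ℕ) < 2 * r ∧ (i : ℕ) % 2 = 0 then 1 else 0



lemma sign_prod (y : ℝ) : ∀ (W : Multiset ℝ), (∀ ρ ∈ W, ρ ≠ y) →
    ((W.map (fun ρ => y - ρ)).prod ≠ 0 ∧
     (0 < (W.map (fun ρ => y - ρ)).prod ↔ Even (Multiset.card (W.filter (fun ρ => y < ρ))))) := by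
  intro W
  induction W using Multiset.induction_on with
  | empty => intro _; simp
  | cons a W ih => ?_
  intro h
  have ha : a ≠ y := h a (Multiset.mem_cons_self a W)
  obtain ⟨hne, hiff⟩ := ih (fun ρ hρ => h ρ (Multiset.mem_cons_of_mem hρ))
  rw [Multiset.map_cons, Multiset.prod_cons, Multiset.filter_cons]
  have hya : y - a ≠ 0 := sub_ne_zero.mpr (Ne.symm ha)
  constructor
  · exact mul_ne_zero hya hne
  · rcases lt_or_gt_of_ne (Ne.symm ha) with hlt | hgt
    · have : (if y < a then ({a} : Multiset ℝ) else 0) = {a} := if_pos hlt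
      rw [this]
      have hneg : y - a < 0 := by linarith
      rw [Multiset.card_add, Multiset.card_singleton]
      rw [show (1 : ℕ) + Multiset.card (Multiset.filter (fun ρ => y < ρ) W)
          = Multiset.card (Multiset.filter (fun ρ => y < ρ) W) + 1 from add_comm _ _,
        Nat.even_add_one, ← hiff]
      constructor
      · intro hpos hP
        nlinarith
      · intro hP
        rcases hne.lt_or_gt with h1 | h1
        · nlinarith
        · exact absurd h1 hP
    · have : (if y < a then ({a} : Multiset ℝ) else 0) = 0 := if_neg (not_lt.mpr hgt.le)
      rw [this, zero_add, ← hiff]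
      have hpos : 0 < y - a := by linarith
      constructor
      · intro hp
        nlinarith
      · intro hp
        exact mul_pos hpos hp

lemma ivt_root (Q : Polynomial ℝ) {a b : ℝ} (hab : a < b) (hsgn : Q.eval a * Q.eval b < 0) :
    ∃ x ∈ Set.Ioo a b, Q.eval x = 0 := by
  have hc : ContinuousOn (fun x => Q.eval x) (Set.Icc a b) := (Q.continuous_aeval).continuousOn
  rcases mul_neg_iff.mp hsgn with ⟨h1, h2⟩ | ⟨h1, h2⟩
  · have h0 : (0:ℝ) ∈ Set.Ioo (Q.eval b) (Q.eval a) := ⟨h2, h1⟩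
    obtain ⟨x, hx, hx0⟩ := intermediate_value_Ioo' hab.le hc h0
    exact ⟨x, hx, hx0⟩
  · have h0 : (0:ℝ) ∈ Set.Ioo (Q.eval a) (Q.eval b) := ⟨h1, h2⟩
    obtain ⟨x, hx, hx0⟩ := intermediate_value_Ioo hab.le hc h0
    exact ⟨x, hx, hx0⟩

lemma card_filter_bind (s : Multiset ℝ) (f : ℝ → Multiset ℝ) (P : ℝ → Prop) :
    Multiset.card ((s.bind f).filter P)
      = (s.map (fun a => Multiset.card ((f a).filter P))).sum := by
  induction s using Multiset.induction_on with
  | empty => simp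
  | cons a s ih =>
    rw [Multiset.cons_bind, Multiset.filter_add, Multiset.card_add, ih, Multiset.map_cons,
      Multiset.sum_cons]

lemma factor_linear (Q : Polynomial ℝ) (d : ℕ) (hd : Q.natDegree = d)
    (hs : Q.Splits) (h0 : Q.eval 0 = 1) :
    ∃ u : ℕ → ℝ, (∏ k ∈ Finset.range d, (C (u k) * X + 1)) = Q := by
  have hQ0 : Q ≠ 0 := fun h => by simp [h] at h0
  have hcard : Multiset.card Q.roots = d := by rw [splits_iff_card_roots.mp hs, hd]
  -- roots are nonzero
  have hr0 : ∀ r ∈ Q.roots, r ≠ 0 := by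
    intro r hr h
    have h2 : eval r Q = 0 := (mem_roots hQ0).mp hr
    rw [h] at h2
    rw [h2] at h0
    norm_num at h0
  set L := Q.roots.toList with hL
  have hLlen : L.length = d := by rw [hL, Multiset.length_toList, hcard]
  have hLmem : ∀ r ∈ L, r ∈ Q.roots := by
    intro r hr; rwa [← Multiset.mem_toList]
  refine ⟨fun k => if h : k < L.length then -(L.get ⟨k, h⟩)⁻¹ else 0, ?_⟩
  -- turn range-product into a multiset product over roots
  have h1 : (∏ k ∈ Finset.range d, (C ((fun k => if h : k < L.length then -(L.get ⟨k, h⟩)⁻¹ else 0) k) * X + 1))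
      = (Multiset.map (fun r => C (-r⁻¹) * X + 1) Q.roots).prod := by
    rw [← Fin.prod_univ_eq_prod_range, ← List.prod_ofFn]
    have : (List.ofFn fun i : Fin d => C ((fun k => if h : k < L.length then -(L.get ⟨k, h⟩)⁻¹ else 0) (i : ℕ)) * X + 1)
        = L.map (fun r => C (-r⁻¹) * X + 1) := by
      have hdl : d = L.length := hLlen.symm
      subst hdl
      rw [← List.ofFn_get (L.map (fun r => C (-r⁻¹) * X + 1))]
      simp
    rw [this]
    rw [← Multiset.prod_coe, ← Multiset.map_coe, hL, Multiset.coe_toList]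
  rw [h1]
  -- rewrite each factor
  have h2 : (Multiset.map (fun r => C (-r⁻¹) * X + 1) Q.roots).prod
      = (Multiset.map (fun r : ℝ => C (-r⁻¹)) Q.roots).prod * (Multiset.map (fun r => X - C r) Q.roots).prod := by
    rw [← Multiset.prod_map_mul]
    apply congrArg
    apply Multiset.map_congr rfl
    intro r hr
    have : (r : ℝ) ≠ 0 := hr0 r hr
    have : C (-r⁻¹) * (X - C r) = C (-r⁻¹) * X + 1 := by
      rw [mul_sub, ← C_mul]
      have : -r⁻¹ * r = -1 := by field_simp
      rw [this]
      simp [sub_eq_add_neg]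
    rw [← this]
  rw [h2]
  have hfac := hs.eq_prod_roots
  have heval : Q.leadingCoeff * (Multiset.map (fun r : ℝ => -r) Q.roots).prod = 1 := by
    have := congrArg (eval 0) hfac
    rw [h0] at this
    rw [this, eval_mul, eval_C, eval_multiset_prod, Multiset.map_map]
    apply congrArg
    apply congrArg
    apply Multiset.map_congr rfl
    intro r _
    simp
  have hCprod : (Multiset.map (fun r : ℝ => C (-r⁻¹)) Q.roots).prod = C Q.leadingCoeff := by
    have hmm : Multiset.map (fun r : ℝ => C (-r⁻¹)) Q.roots = Multiset.map (⇑C) (Multiset.map (fun r : ℝ => -r⁻¹) Q.roots) := by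
      rw [Multiset.map_map]; rfl
    rw [hmm, Multiset.prod_hom (Multiset.map (fun r : ℝ => -r⁻¹) Q.roots) (C : ℝ →+* Polynomial ℝ)]
    apply congrArg
    have hmul : (Multiset.map (fun r : ℝ => -r⁻¹) Q.roots).prod * (Multiset.map (fun r : ℝ => -r) Q.roots).prod = 1 := by
      rw [← Multiset.prod_map_mul]
      have : Multiset.map (fun r : ℝ => -r⁻¹ * -r) Q.roots = Multiset.map (fun _ => (1:ℝ)) Q.roots := by
        apply Multiset.map_congr rfl
        intro r hr
        have : (r:ℝ) ≠ 0 := hr0 r hr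
        field_simp
      rw [this]
      simp
    calc (Multiset.map (fun r : ℝ => -r⁻¹) Q.roots).prod
        = (Multiset.map (fun r : ℝ => -r⁻¹) Q.roots).prod * (Q.leadingCoeff * (Multiset.map (fun r : ℝ => -r) Q.roots).prod) := by
          rw [heval, mul_one]
      _ = Q.leadingCoeff * ((Multiset.map (fun r : ℝ => -r⁻¹) Q.roots).prod * (Multiset.map (fun r : ℝ => -r) Q.roots).prod) := by
          ring
      _ = Q.leadingCoeff := by rw [hmul, mul_one]
  rw [hCprod, ← hfac]

set_option maxHeartbeats 1000000 in
lemma key_poly (m p : Polynomial ℝ) (hmo : m.Monic) (hn : 1 ≤ m.natDegree)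
    (hsplit : m.Splits) (hm0 : m.eval 0 ≠ 0)
    (hmult : ∀ μ : ℝ, m.rootMultiplicity μ ≤ 2)
    (hdegp : p.natDegree < m.natDegree)
    (hproots : ∀ μ ∈ m.roots, p.eval μ ≠ 0) :
    ∃ d : ℕ, 1 ≤ d ∧ ∃ u : ℕ → ℝ,
      m ∣ (∏ k ∈ Finset.range d, (C (u k) * X + 1)) - p := by
  have hmne : m ≠ 0 := hmo.ne_zero
  set n := m.natDegree with hn'
  have hcardΛ : Multiset.card m.roots = n := splits_iff_card_roots.mp hsplit
  have hΛ0 : (0:ℝ) ∉ m.roots := by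
    intro h
    exact hm0 ((mem_roots hmne).mp h)
  set F : Finset ℝ := m.roots.toFinset with hF
  have hFne : F.Nonempty := by
    rw [hF, Multiset.toFinset_nonempty]
    intro h
    rw [h] at hcardΛ
    simp at hcardΛ
    omega
  obtain ⟨lam0, hlam0⟩ := hFne
  set G : Finset ℝ := insert (0:ℝ) F with hG
  have h0G : (0:ℝ) ∈ G := Finset.mem_insert_self _ _
  have hFG : F ⊆ G := Finset.subset_insert _ _
  have hlam00 : lam0 ≠ 0 := by
    intro h
    apply hΛ0
    rw [← h]
    exact Multiset.mem_toFinset.mp hlam0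
  have hod : G.offDiag.Nonempty := ⟨(lam0, 0), Finset.mem_offDiag.mpr ⟨hFG hlam0, h0G, hlam00⟩⟩
  set gapS := G.offDiag.image (fun q => |q.1 - q.2|) with hgapS
  have hgapSne : gapS.Nonempty := hod.image _
  set gap := gapS.min' hgapSne with hgap
  have hgappos : 0 < gap := by
    obtain ⟨q, hq, hqe⟩ := Finset.mem_image.mp (gapS.min'_mem hgapSne)
    obtain ⟨_, _, hne⟩ := Finset.mem_offDiag.mp hq
    rw [hgap, ← hqe]
    exact abs_pos.mpr (sub_ne_zero.mpr hne)
  have hgaple : ∀ x ∈ G, ∀ y ∈ G, x ≠ y → gap ≤ |x - y| := by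
    intro x hx y hy hxy
    apply Finset.min'_le
    exact Finset.mem_image.mpr ⟨(x, y), Finset.mem_offDiag.mpr ⟨hx, hy, hxy⟩, rfl⟩
  set δ := gap / 4 with hδdef
  set ε := gap / 12 with hεdef
  have hδpos : 0 < δ := by rw [hδdef]; linarith
  have hεpos : 0 < ε := by rw [hεdef]; linarith
  have hδε : δ = 3 * ε := by rw [hδdef, hεdef]; ring
  have hgap4 : gap = 4 * δ := by rw [hδdef]; ring
  set cnt0 : ℝ → ℕ := fun v => Multiset.card (((0:ℝ) ::ₘ m.roots).filter (fun ρ => v < ρ)) with hcnt0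
  set D : Finset ℝ := F.filter (fun v => m.roots.count v = 2) with hD
  set D' : Finset ℝ := D.filter (fun v => ¬(Even (cnt0 v) ↔ p.eval v < 0)) with hD'
  have hD'G : ∀ μ ∈ D', μ ∈ G := fun μ h =>
    hFG (Finset.mem_filter.mp (Finset.mem_filter.mp h).1).1
  set pairs : Multiset ℝ := D'.val.bind (fun μ => {μ - δ, μ + δ}) with hpairs
  set W : Multiset ℝ := ((0:ℝ) ::ₘ m.roots) + pairs with hW
  set d := Multiset.card W with hd
  set R : Polynomial ℝ := (W.map (fun ρ => X - C ρ)).prod with hR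
  have hmemW : ∀ ρ ∈ W, ρ = 0 ∨ ρ ∈ m.roots ∨ ∃ μ ∈ D', ρ = μ - δ ∨ ρ = μ + δ := by
    intro ρ hρ
    rw [hW] at hρ
    rcases Multiset.mem_add.mp hρ with hb | hp
    · rcases Multiset.mem_cons.mp hb with h | h
      · exact Or.inl h
      · exact Or.inr (Or.inl h)
    · right; right
      rw [hpairs] at hp
      obtain ⟨μ, hμ, hmem⟩ := Multiset.mem_bind.mp hp
      refine ⟨μ, hμ, ?_⟩
      rcases Multiset.mem_cons.mp hmem with h | h
      · exact Or.inl h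
      · exact Or.inr (Multiset.mem_singleton.mp h)
  have hWstruct : ∀ ρ ∈ W, ∃ g ∈ G, ∃ a : ℝ, (a = 0 ∨ a = -δ ∨ a = δ) ∧ ρ = g + a := by
    intro ρ hρ
    rcases hmemW ρ hρ with h | h | ⟨μ, hμ, h⟩
    · exact ⟨0, h0G, 0, Or.inl rfl, by rw [h]; ring⟩
    · exact ⟨ρ, hFG (Multiset.mem_toFinset.mpr h), 0, Or.inl rfl, by ring⟩
    · rcases h with h | h
      · exact ⟨μ, hD'G μ hμ, -δ, Or.inr (Or.inl rfl), by rw [h]; try ring⟩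
      · exact ⟨μ, hD'G μ hμ, δ, Or.inr (Or.inr rfl), by rw [h]; try ring⟩
  have hsep : ∀ v ∈ W, ∀ ρ ∈ W, ρ ≠ v → δ ≤ |ρ - v| := by
    intro v hv ρ hρ hne
    obtain ⟨g, hg, a, ha, hρa⟩ := hWstruct ρ hρ
    obtain ⟨g', hg', b, hb, hvb⟩ := hWstruct v hv
    rcases eq_or_ne g g' with hgg | hgg
    · subst hgg
      rw [hρa, hvb, show g + a - (g + b) = a - b by ring]
      have habne : a - b ≠ 0 := by
        intro h
        apply hne
        rw [hρa, hvb, sub_eq_zero.mp h]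
      have h1 : a - b = δ ∨ a - b = -δ ∨ a - b = 2*δ ∨ a - b = -(2*δ) := by
        rcases ha with rfl|rfl|rfl <;> rcases hb with rfl|rfl|rfl
        · exact absurd (by ring) habne
        · left; ring
        · right; left; ring
        · right; left; ring
        · exact absurd (by ring) habne
        · right; right; right; ring
        · left; ring
        · right; right; left; ring
        · exact absurd (by ring) habne
      rcases h1 with h1|h1|h1|h1 <;> rw [h1]
      · rw [abs_of_pos hδpos]
      · rw [abs_of_neg (by linarith)]; linarith
      · rw [abs_of_pos (by linarith)]; linarith
      · rw [abs_of_neg (by linarith)]; linarith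
    · have hgapge : gap ≤ |g - g'| := hgaple g hg g' hg' hgg
      have haa : |a| ≤ δ := by
        rcases ha with rfl|rfl|rfl
        · simp [hδpos.le]
        · rw [abs_neg, abs_of_pos hδpos]
        · rw [abs_of_pos hδpos]
      have hbb : |b| ≤ δ := by
        rcases hb with rfl|rfl|rfl
        · simp [hδpos.le]
        · rw [abs_neg, abs_of_pos hδpos]
        · rw [abs_of_pos hδpos]
      have htri : |g - g'| ≤ |ρ - v| + |a| + |b| := by
        rw [show g - g' = ((ρ - v) - a) + b by rw [hρa, hvb]; ring]
        calc |((ρ - v) - a) + b| ≤ |(ρ - v) - a| + |b| := abs_add_le _ _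
          _ ≤ |ρ - v| + |a| + |b| := by
              have := abs_sub (ρ - v) a
              linarith
      linarith
  have hbaseG : ∀ ρ ∈ ((0:ℝ) ::ₘ m.roots), ρ ∈ G := by
    intro ρ hρ
    rcases Multiset.mem_cons.mp hρ with rfl | h
    · exact h0G
    · exact hFG (Multiset.mem_toFinset.mpr h)
  have hpairG : ∀ μ ∈ D', ∀ g ∈ G, g ≠ μ - δ ∧ g ≠ μ + δ := by
    intro μ hμ g hg
    constructor
    · intro h
      rcases eq_or_ne g μ with rfl | hne
      · have : δ = 0 := by linarith
        exact hδpos.ne' this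
      · have h2 := hgaple g hg μ (hD'G μ hμ) hne
        rw [h, show μ - δ - μ = -δ by ring, abs_neg, abs_of_pos hδpos] at h2
        linarith
    · intro h
      rcases eq_or_ne g μ with rfl | hne
      · have : δ = 0 := by linarith
        exact hδpos.ne' this
      · have h2 := hgaple g hg μ (hD'G μ hμ) hne
        rw [h, show μ + δ - μ = δ by ring, abs_of_pos hδpos] at h2
        linarith
  have hmempair : ∀ (μ : ℝ) (a : ℝ), a ∈ ({μ - δ, μ + δ} : Multiset ℝ) → |a - μ| = δ := by
    intro μ a ha
    rcases Multiset.mem_cons.mp ha with h | h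
    · rw [h, show μ - δ - μ = -δ by ring, abs_neg, abs_of_pos hδpos]
    · rw [Multiset.mem_singleton.mp h, show μ + δ - μ = δ by ring, abs_of_pos hδpos]
  have hpairs_nodup : pairs.Nodup := by
    rw [hpairs, Multiset.nodup_bind]
    constructor
    · intro μ _
      refine Multiset.nodup_cons.mpr ⟨?_, Multiset.nodup_singleton _⟩
      rw [Multiset.mem_singleton]
      intro h
      have : δ = 0 := by linarith
      exact hδpos.ne' this
    · refine Multiset.Nodup.pairwise ?_ D'.nodup
      intro μ hμ ν hν hne
      have : Disjoint ({μ - δ, μ + δ} : Multiset ℝ) ({ν - δ, ν + δ} : Multiset ℝ) := by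
        rw [Multiset.disjoint_left]
        intro a ha hb
        have h1 := hmempair μ a ha
        have h2 := hmempair ν a hb
        have hgapge := hgaple μ (hD'G μ hμ) ν (hD'G ν hν) hne
        have : |μ - ν| ≤ 2 * δ := by
          calc |μ - ν| = |(a - ν) - (a - μ)| := by ring_nf
            _ ≤ |a - ν| + |a - μ| := abs_sub _ _
            _ ≤ 2 * δ := by rw [h1, h2]; linarith
        linarith
      exact this
  have hpairs_notG : ∀ a ∈ pairs, a ∉ ((0:ℝ) ::ₘ m.roots) := by
    intro a ha hmem
    rw [hpairs] at ha
    obtain ⟨μ, hμ, hamem⟩ := Multiset.mem_bind.mp ha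
    have haG : a ∈ G := hbaseG a hmem
    have := hpairG μ hμ a haG
    rcases Multiset.mem_cons.mp hamem with h | h
    · exact this.1 h
    · exact this.2 (Multiset.mem_singleton.mp h)
  have hWcount : ∀ v ∈ W, W.count v = 1 ∨ (W.count v = 2 ∧ v ∈ D) := by
    intro v hv
    have hcadd : W.count v = ((0:ℝ) ::ₘ m.roots).count v + pairs.count v := by
      rw [hW, Multiset.count_add]
    rw [hW] at hv
    rcases Multiset.mem_add.mp hv with hb | hp
    · have hpc : pairs.count v = 0 := by
        rw [Multiset.count_eq_zero]
        intro hvp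
        exact hpairs_notG v hvp hb
      rcases Multiset.mem_cons.mp hb with rfl | hroot
      · left
        rw [hcadd, hpc, Multiset.count_cons_self, Multiset.count_eq_zero.mpr hΛ0]
      · have hvne0 : v ≠ 0 := by
          intro h
          rw [h] at hroot
          exact hΛ0 hroot
        have hbc : ((0:ℝ) ::ₘ m.roots).count v = m.roots.count v := by
          rw [Multiset.count_cons_of_ne hvne0]
        have hle : m.roots.count v ≤ 2 := by
          rw [count_roots]
          exact hmult v
        have hge : 1 ≤ m.roots.count v := Multiset.one_le_count_iff_mem.mpr hroot
        rw [hcadd, hpc, hbc, add_zero]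
        interval_cases h : m.roots.count v
        · left; rfl
        · right
          refine ⟨rfl, ?_⟩
          rw [hD, Finset.mem_filter]
          exact ⟨Multiset.mem_toFinset.mpr hroot, h⟩
    · left
      have hbc : ((0:ℝ) ::ₘ m.roots).count v = 0 := by
        rw [Multiset.count_eq_zero]
        intro h
        exact hpairs_notG v hp h
      have hpc : pairs.count v = 1 := by
        have hle := Multiset.nodup_iff_count_le_one.mp hpairs_nodup v
        have hge := Multiset.one_le_count_iff_mem.mpr hp
        omega
      rw [hcadd, hbc, hpc]
  set cnt : ℝ → ℕ := fun y => Multiset.card (W.filter (fun ρ => y < ρ)) with hcnt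
  have hnotW : ∀ v ∈ W, ∀ s : ℝ, |s| = ε → ∀ ρ ∈ W, ρ ≠ v + s := by
    intro v hv s hs ρ hρ h
    rcases eq_or_ne ρ v with rfl | hne
    · have hs0 : s = 0 := by linarith
      rw [hs0, abs_zero] at hs
      exact hεpos.ne hs
    · have h3 := hsep v hv ρ hρ hne
      rw [h, show v + s - v = s by ring, hs, hδε] at h3
      linarith
  have hcnt_split : ∀ v ∈ W, cnt (v - ε) = cnt (v + ε) + W.count v := by
    intro v hv
    have hpt : ∀ ρ ∈ W, ((v - ε < ρ) ↔ ((v + ε < ρ) ∨ v = ρ)) := by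
      intro ρ hρ
      constructor
      · intro hlt
        rcases eq_or_ne ρ v with rfl | hne
        · right; rfl
        · left
          have h3 := hsep v hv ρ hρ hne
          rw [hδε] at h3
          rcases abs_cases (ρ - v) with ⟨he, _⟩ | ⟨he, _⟩ <;> linarith
      · intro h
        rcases h with h | h
        · linarith
        · rw [← h]; linarith
    have h1 := Multiset.filter_add_filter (fun ρ => v + ε < ρ) (fun ρ => v = ρ) W
    have h2 : W.filter (fun ρ => (v + ε < ρ) ∧ v = ρ) = 0 := by
      rw [Multiset.filter_eq_nil]
      rintro a _ ⟨hlt, rfl⟩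
      linarith
    rw [h2, add_zero] at h1
    have h1' := congrArg Multiset.card h1
    rw [Multiset.card_add] at h1'
    calc cnt (v - ε) = Multiset.card (W.filter (fun ρ => (v + ε < ρ) ∨ v = ρ)) := by
          rw [hcnt]
          exact congrArg Multiset.card (Multiset.filter_congr hpt)
      _ = cnt (v + ε) + W.count v := by
          rw [← h1', hcnt, Multiset.count_eq_card_filter_eq]
  have hcnt_eq : ∀ v ∈ W, cnt v = cnt (v + ε) := by
    intro v hv
    rw [hcnt]
    apply congrArg Multiset.card
    apply Multiset.filter_congr
    intro ρ hρ
    rcases eq_or_ne ρ v with rfl | hne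
    · constructor <;> intro h <;> linarith
    · have h3 := hsep v hv ρ hρ hne
      rw [hδε] at h3
      rcases abs_cases (ρ - v) with ⟨he, _⟩ | ⟨he, _⟩ <;> constructor <;> intro h <;> linarith
  have hparD : ∀ v ∈ D, (Even (cnt v) ↔ p.eval v < 0) := by
    intro v hvD
    have hvF : v ∈ F := (Finset.mem_filter.mp hvD).1
    have hvG : v ∈ G := hFG hvF
    have hsplit2 : cnt v = cnt0 v + Multiset.card (pairs.filter (fun ρ => v < ρ)) := by
      simp only [hcnt, hW, hcnt0, Multiset.filter_add, Multiset.card_add]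
    have hcb : Multiset.card (pairs.filter (fun ρ => v < ρ))
        = ∑ μ ∈ D', Multiset.card (({μ - δ, μ + δ} : Multiset ℝ).filter (fun ρ => v < ρ)) := by
      rw [hpairs, card_filter_bind]
      rfl
    have hterm : ∀ μ ∈ D', μ ≠ v →
        Even (Multiset.card (({μ - δ, μ + δ} : Multiset ℝ).filter (fun ρ => v < ρ))) := by
      intro μ hμ hne
      have hgapge := hgaple μ (hD'G μ hμ) v hvG hne
      rcases abs_cases (μ - v) with ⟨he, _⟩ | ⟨he, _⟩
      · have h1 : v < μ - δ := by linarith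
        have h2 : v < μ + δ := by linarith
        have hfe : ({μ - δ, μ + δ} : Multiset ℝ).filter (fun ρ => v < ρ) = {μ - δ, μ + δ} := by
          rw [Multiset.filter_eq_self]
          intro a ha
          rcases Multiset.mem_cons.mp ha with h | h
          · rw [h]; exact h1
          · rw [Multiset.mem_singleton.mp h]; exact h2
        rw [hfe]
        simp only [Multiset.insert_eq_cons, Multiset.card_cons, Multiset.card_singleton]
        exact even_two
      · have h1 : ¬ (v < μ - δ) := by linarith
        have h2 : ¬ (v < μ + δ) := by linarith
        have hfe : ({μ - δ, μ + δ} : Multiset ℝ).filter (fun ρ => v < ρ) = 0 := by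
          rw [Multiset.filter_eq_nil]
          intro a ha
          rcases Multiset.mem_cons.mp ha with h | h
          · rw [h]; exact h1
          · rw [Multiset.mem_singleton.mp h]; exact h2
        rw [hfe]
        simp
    by_cases hvD' : v ∈ D'
    · have htermv : Multiset.card (({v - δ, v + δ} : Multiset ℝ).filter (fun ρ => v < ρ)) = 1 := by
        have h1 : ¬ (v < v - δ) := by linarith
        have h2 : v < v + δ := by linarith
        rw [show ({v - δ, v + δ} : Multiset ℝ) = (v - δ) ::ₘ {v + δ} from rfl]
        rw [Multiset.filter_cons_of_neg _ h1, Multiset.filter_singleton, if_pos h2]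
        rfl
      have hsum : ∑ μ ∈ D', Multiset.card (({μ - δ, μ + δ} : Multiset ℝ).filter (fun ρ => v < ρ))
          = 1 + ∑ μ ∈ D'.erase v, Multiset.card (({μ - δ, μ + δ} : Multiset ℝ).filter (fun ρ => v < ρ)) := by
        rw [← Finset.add_sum_erase D' _ hvD', htermv]
      have heven_rest : Even (∑ μ ∈ D'.erase v, Multiset.card (({μ - δ, μ + δ} : Multiset ℝ).filter (fun ρ => v < ρ))) :=
        Finset.even_sum _ (fun μ hμ => hterm μ (Finset.mem_of_mem_erase hμ) (Finset.ne_of_mem_erase hμ))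
      have hmemD' := (Finset.mem_filter.mp hvD').2
      rw [hsplit2, hcb, hsum]
      obtain ⟨k, hk⟩ := heven_rest
      rw [hk, Nat.even_iff] at *
      by_cases hP : p.eval v < 0
      · simp only [hP, iff_true] at hmemD' ⊢
        omega
      · simp only [hP, iff_false] at hmemD' ⊢
        omega
    · have hprop : (Even (cnt0 v) ↔ p.eval v < 0) := by
        by_contra hcon
        exact hvD' (Finset.mem_filter.mpr ⟨hvD, hcon⟩)
      have heven_rest : Even (∑ μ ∈ D', Multiset.card (({μ - δ, μ + δ} : Multiset ℝ).filter (fun ρ => v < ρ))) := by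
        refine Finset.even_sum _ (fun μ hμ => hterm μ hμ ?_)
        intro h
        rw [h] at hμ
        exact hvD' hμ
      rw [hsplit2, hcb]
      obtain ⟨k, hk⟩ := heven_rest
      rw [hk, Nat.even_iff] at *
      by_cases hP : p.eval v < 0
      · simp only [hP, iff_true] at hprop ⊢
        omega
      · simp only [hP, iff_false] at hprop ⊢
        omega
  set hcoef : ℝ := (1 - p.eval 0) / m.eval 0 with hhc
  set P0 : Polynomial ℝ := p + C hcoef * m with hP0
  have hP0eval0 : P0.eval 0 = 1 := by
    rw [hP0, eval_add, eval_mul, eval_C, hhc]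
    field_simp
    ring
  have hP0evalroot : ∀ μ ∈ m.roots, P0.eval μ = p.eval μ := by
    intro μ hμ
    rw [hP0, eval_add, eval_mul, eval_C, (mem_roots hmne).mp hμ, mul_zero, add_zero]
  have hP0deg : P0.natDegree ≤ n := by
    rw [hP0]
    refine le_trans (natDegree_add_le _ _) (max_le hdegp.le ?_)
    exact le_trans (natDegree_C_mul_le _ _) le_rfl
  have h0W : (0:ℝ) ∈ W := by
    rw [hW]
    exact Multiset.mem_add.mpr (Or.inl (Multiset.mem_cons_self _ _))
  have hrootsW : ∀ μ ∈ m.roots, μ ∈ W := by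
    intro μ hμ
    rw [hW]
    exact Multiset.mem_add.mpr (Or.inl (Multiset.mem_cons_of_mem hμ))
  have hR0 : ∀ ρ ∈ W, R.eval ρ = 0 := by
    intro ρ hρ
    rw [hR, eval_multiset_prod]
    apply Multiset.prod_eq_zero
    rw [Multiset.map_map]
    refine Multiset.mem_map.mpr ⟨ρ, hρ, ?_⟩
    simp
  have hRdeg : R.natDegree = d := by
    rw [hR, natDegree_multiset_prod]
    · rw [Multiset.map_map]
      have hcg : (Multiset.map (natDegree ∘ fun ρ => X - C ρ) W) = Multiset.map (fun _ => 1) W :=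
        Multiset.map_congr rfl (fun ρ _ => natDegree_X_sub_C ρ)
      rw [hcg, Multiset.map_const', Multiset.sum_replicate, smul_eq_mul, mul_one, hd]
    · intro hzero
      obtain ⟨ρ, _, hρ⟩ := Multiset.mem_map.mp hzero
      exact X_sub_C_ne_zero ρ hρ
  have hRevalW : ∀ y : ℝ, (∀ ρ ∈ W, ρ ≠ y) → (R.eval y ≠ 0 ∧ (0 < R.eval y ↔ Even (cnt y))) := by
    intro y hy
    have hsp := sign_prod y W hy
    have hre : R.eval y = (W.map (fun ρ => y - ρ)).prod := by
      rw [hR, eval_multiset_prod, Multiset.map_map]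
      exact congrArg Multiset.prod (Multiset.map_congr rfl (fun ρ _ => by simp))
    rw [hre]
    exact hsp
  set c : ℝ := 1 + ∑ v ∈ W.toFinset,
      (|P0.eval (v - ε)| / |R.eval (v - ε)| + |P0.eval (v + ε)| / |R.eval (v + ε)|) with hcdef
  have hsumnn : ∀ v ∈ W.toFinset,
      0 ≤ |P0.eval (v - ε)| / |R.eval (v - ε)| + |P0.eval (v + ε)| / |R.eval (v + ε)| :=
    fun v _ => add_nonneg (div_nonneg (abs_nonneg _) (abs_nonneg _)) (div_nonneg (abs_nonneg _) (abs_nonneg _))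
  have hcpos : 0 < c := by
    rw [hcdef]
    have h1 : 0 ≤ ∑ v ∈ W.toFinset,
        (|P0.eval (v - ε)| / |R.eval (v - ε)| + |P0.eval (v + ε)| / |R.eval (v + ε)|) :=
      Finset.sum_nonneg hsumnn
    linarith
  set Q : Polynomial ℝ := P0 + C c * R with hQdef
  have hnd : n < d := by
    rw [hd, hW, Multiset.card_add, Multiset.card_cons, hcardΛ]
    omega
  have hd1 : 1 ≤ d := by omega
  have hQdeg : Q.natDegree = d := by
    rw [hQdef]
    rw [natDegree_add_eq_right_of_natDegree_lt]
    · rw [natDegree_C_mul hcpos.ne', hRdeg]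
    · rw [natDegree_C_mul hcpos.ne', hRdeg]
      exact lt_of_le_of_lt hP0deg hnd
  have hQeval0 : Q.eval 0 = 1 := by
    rw [hQdef, eval_add, eval_mul, eval_C, hP0eval0, hR0 0 h0W, mul_zero, add_zero]
  have hQevalD : ∀ v ∈ D, Q.eval v = p.eval v := by
    intro v hvD
    have hvroots : v ∈ m.roots := Multiset.mem_toFinset.mp (Finset.mem_filter.mp hvD).1
    rw [hQdef, eval_add, eval_mul, eval_C, hR0 v (hrootsW v hvroots), mul_zero, add_zero,
      hP0evalroot v hvroots]
  have hQsign : ∀ v ∈ W.toFinset, ∀ s : ℝ, (s = ε ∨ s = -ε) →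
      (Q.eval (v + s) ≠ 0 ∧ (0 < Q.eval (v + s) ↔ Even (cnt (v + s)))) := by
    intro v hv s hs
    have hvW : v ∈ W := Multiset.mem_toFinset.mp hv
    have habs : |s| = ε := by
      rcases hs with rfl | rfl
      · exact abs_of_pos hεpos
      · rw [abs_neg]; exact abs_of_pos hεpos
    obtain ⟨hRne, hRiff⟩ := hRevalW (v + s) (hnotW v hvW s habs)
    have hratio : |P0.eval (v + s)| / |R.eval (v + s)| ≤ c - 1 := by
      have hle := Finset.single_le_sum hsumnn hv
      rcases hs with rfl | rfl
      · have h2 : |P0.eval (v + ε)| / |R.eval (v + ε)|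
            ≤ |P0.eval (v - ε)| / |R.eval (v - ε)| + |P0.eval (v + ε)| / |R.eval (v + ε)| :=
          le_add_of_nonneg_left (div_nonneg (abs_nonneg _) (abs_nonneg _))
        rw [hcdef]
        linarith
      · rw [show v + -ε = v - ε by ring]
        have h2 : |P0.eval (v - ε)| / |R.eval (v - ε)|
            ≤ |P0.eval (v - ε)| / |R.eval (v - ε)| + |P0.eval (v + ε)| / |R.eval (v + ε)| :=
          le_add_of_nonneg_right (div_nonneg (abs_nonneg _) (abs_nonneg _))
        rw [hcdef]
        linarith
    have hP0le : |P0.eval (v + s)| ≤ (c - 1) * |R.eval (v + s)| := by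
      rw [div_le_iff₀ (abs_pos.mpr hRne)] at hratio
      linarith
    have hQev : Q.eval (v + s) = P0.eval (v + s) + c * R.eval (v + s) := by
      rw [hQdef, eval_add, eval_mul, eval_C]
    rcases hRne.lt_or_gt with hRneg | hRpos
    · have hQneg : Q.eval (v + s) < 0 := by
        rw [hQev]
        have h1 : P0.eval (v + s) ≤ |P0.eval (v + s)| := le_abs_self _
        have h2 : |R.eval (v + s)| = -(R.eval (v + s)) := abs_of_neg hRneg
        rw [h2] at hP0le
        linarith
      refine ⟨hQneg.ne, ?_, ?_⟩
      · intro hcon; linarith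
      · intro hE
        exact absurd (hRiff.mpr hE) (by linarith)
    · have hQpos : 0 < Q.eval (v + s) := by
        rw [hQev]
        have h1 : -|P0.eval (v + s)| ≤ P0.eval (v + s) := neg_abs_le _
        have h2 : |R.eval (v + s)| = R.eval (v + s) := abs_of_pos hRpos
        rw [h2] at hP0le
        linarith
      exact ⟨hQpos.ne', ⟨fun _ => hRiff.mp hRpos, fun _ => hQpos⟩⟩
  have hroots2 : ∀ v ∈ W.toFinset, ∃ Sv : Finset ℝ, Sv.card = W.count v ∧
      ∀ x ∈ Sv, x ∈ Set.Ioo (v - ε) (v + ε) ∧ Q.eval x = 0 := by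
    intro v hv
    have hvW := Multiset.mem_toFinset.mp hv
    obtain ⟨hne2, hiff2⟩ := hQsign v hv ε (Or.inl rfl)
    have hQm := hQsign v hv (-ε) (Or.inr rfl)
    rw [show v + -ε = v - ε by ring] at hQm
    obtain ⟨hne1, hiff1⟩ := hQm
    have hsplitc := hcnt_split v hvW
    rcases hWcount v hvW with h1 | ⟨h2, hvD⟩
    · have hpar : Even (cnt (v - ε)) ↔ ¬ Even (cnt (v + ε)) := by
        rw [hsplitc, h1, Nat.even_add_one]
      have hprod : Q.eval (v - ε) * Q.eval (v + ε) < 0 := by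
        rcases hne2.lt_or_gt with hq2 | hq2
        · have hnotE : ¬ Even (cnt (v + ε)) := fun h => absurd (hiff2.mpr h) (by linarith)
          have hQ1 : 0 < Q.eval (v - ε) := hiff1.mpr (hpar.mpr hnotE)
          nlinarith
        · have hE : Even (cnt (v + ε)) := hiff2.mp hq2
          have hQ1 : Q.eval (v - ε) < 0 := by
            rcases hne1.lt_or_gt with hx | hx
            · exact hx
            · exact absurd hE (hpar.mp (hiff1.mp hx))
          nlinarith
      obtain ⟨x, hx, hx0⟩ := ivt_root Q (by linarith : v - ε < v + ε) hprod
      refine ⟨{x}, by rw [Finset.card_singleton, h1], ?_⟩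
      intro y hy
      rw [Finset.mem_singleton] at hy
      subst hy
      exact ⟨hx, hx0⟩
    · have hpar : Even (cnt (v - ε)) ↔ Even (cnt (v + ε)) := by
        rw [hsplitc, h2]
        simp [Nat.even_add]
      have hvroots : v ∈ m.roots := Multiset.mem_toFinset.mp (Finset.mem_filter.mp hvD).1
      have hQv : Q.eval v = p.eval v := hQevalD v hvD
      have hpvne : p.eval v ≠ 0 := hproots v hvroots
      have hpv := hparD v hvD
      have hcnteq := hcnt_eq v hvW
      have hkey : (0 < Q.eval (v - ε) ∧ 0 < Q.eval (v + ε) ∧ Q.eval v < 0) ∨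
          (Q.eval (v - ε) < 0 ∧ Q.eval (v + ε) < 0 ∧ 0 < Q.eval v) := by
        by_cases hE : Even (cnt (v + ε))
        · left
          refine ⟨hiff1.mpr (hpar.mpr hE), hiff2.mpr hE, ?_⟩
          rw [hQv]
          exact hpv.mp (by rw [hcnteq]; exact hE)
        · right
          have hq2 : Q.eval (v + ε) < 0 := by
            rcases hne2.lt_or_gt with hx | hx
            · exact hx
            · exact absurd (hiff2.mp hx) hE
          have hq1 : Q.eval (v - ε) < 0 := by
            rcases hne1.lt_or_gt with hx | hx
            · exact hx
            · exact absurd (hpar.mp (hiff1.mp hx)) hE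
          have hpvpos : 0 < p.eval v := by
            rcases hpvne.lt_or_gt with hx | hx
            · exact absurd (hpv.mpr hx) (by rw [hcnteq]; exact hE)
            · exact hx
          rw [hQv]
          exact ⟨hq1, hq2, hpvpos⟩
      have hprod1 : Q.eval (v - ε) * Q.eval v < 0 := by
        rcases hkey with ⟨ha, _, hc2⟩ | ⟨ha, _, hc2⟩ <;> nlinarith
      have hprod2 : Q.eval v * Q.eval (v + ε) < 0 := by
        rcases hkey with ⟨_, hb, hc2⟩ | ⟨_, hb, hc2⟩ <;> nlinarith
      obtain ⟨x1, hx1, hx10⟩ := ivt_root Q (by linarith : v - ε < v) hprod1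
      obtain ⟨x2, hx2, hx20⟩ := ivt_root Q (by linarith : v < v + ε) hprod2
      have hx12 : x1 ≠ x2 := by
        intro h
        have ha := hx1.2
        have hb := hx2.1
        rw [h] at ha
        linarith
      refine ⟨{x1, x2}, ?_, ?_⟩
      · rw [Finset.card_insert_of_notMem (by rw [Finset.mem_singleton]; exact hx12),
          Finset.card_singleton, h2]
      · intro y hy
        rcases Finset.mem_insert.mp hy with rfl | hy2
        · exact ⟨⟨hx1.1, by linarith [hx1.2]⟩, hx10⟩
        · rw [Finset.mem_singleton] at hy2
          subst hy2
          exact ⟨⟨by linarith [hx2.1], hx2.2⟩, hx20⟩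
  choose! Sv hSvcard hSvmem using hroots2
  set S : Finset ℝ := W.toFinset.biUnion Sv with hS
  have hdisj : ∀ v ∈ W.toFinset, ∀ v' ∈ W.toFinset, v ≠ v' → Disjoint (Sv v) (Sv v') := by
    intro v hv v' hv' hne
    rw [Finset.disjoint_left]
    intro x hx hx'
    have h1 := (hSvmem v hv x hx).1
    have h2 := (hSvmem v' hv' x hx').1
    have h3 := hsep v (Multiset.mem_toFinset.mp hv) v' (Multiset.mem_toFinset.mp hv') (Ne.symm hne)
    rw [hδε] at h3
    obtain ⟨h1a, h1b⟩ := h1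
    obtain ⟨h2a, h2b⟩ := h2
    rcases abs_cases (v' - v) with ⟨he, _⟩ | ⟨he, _⟩ <;> linarith
  have hScard : S.card = d := by
    rw [hS, Finset.card_biUnion hdisj]
    calc ∑ v ∈ W.toFinset, (Sv v).card = ∑ v ∈ W.toFinset, W.count v :=
          Finset.sum_congr rfl (fun v hv => hSvcard v hv)
      _ = d := by rw [hd]; exact Multiset.toFinset_sum_count_eq W
  have hQne : Q ≠ 0 := by
    intro h
    rw [h] at hQeval0
    simp at hQeval0
  have hSsub : S ⊆ Q.roots.toFinset := by
    intro x hx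
    obtain ⟨v, hv, hxv⟩ := Finset.mem_biUnion.mp hx
    exact Multiset.mem_toFinset.mpr ((mem_roots hQne).mpr (hSvmem v hv x hxv).2)
  have hcard_chain : Multiset.card Q.roots = Q.natDegree := by
    have h1 : d ≤ Q.roots.toFinset.card := hScard ▸ Finset.card_le_card hSsub
    have h2 := Multiset.toFinset_card_le Q.roots
    have h3 := card_roots' Q
    omega
  have hQsplits : Q.Splits := splits_iff_card_roots.mpr hcard_chain
  obtain ⟨u, hu⟩ := factor_linear Q d hQdeg hQsplits hQeval0
  refine ⟨d, hd1, u, ?_⟩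
  rw [hu]
  have hmdvdR : m ∣ R := by
    have h1 : m = (Multiset.map (fun a => X - C a) m.roots).prod :=
      hsplit.eq_prod_roots_of_monic hmo
    rw [hR]
    nth_rewrite 1 [h1]
    apply Multiset.prod_dvd_prod_of_le
    apply Multiset.map_le_map
    rw [hW]
    calc m.roots ≤ (0:ℝ) ::ₘ m.roots := Multiset.le_cons_self _ _
      _ ≤ _ := Multiset.le_add_right _ _
  have hQsub : Q - p = C hcoef * m + C c * R := by
    rw [hQdef, hP0]
    ring
  rw [hQsub]
  exact dvd_add (Dvd.dvd.mul_left dvd_rfl (C hcoef)) (Dvd.dvd.mul_left hmdvdR (C c))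

lemma prodCtrl_eq_aeval {n : ℕ} (B : Matrix (Fin n) (Fin n) ℝ) (l : ℕ) (u : ℕ → ℝ) :
    prodCtrl B l u = Polynomial.aeval B (∏ k ∈ Finset.range l, (C (u k) * X + 1)) := by
  induction l with
  | zero => simp [prodCtrl]
  | succ l ih =>
    rw [prodCtrl, List.range_succ, List.reverse_append, List.reverse_singleton,
      List.singleton_append, List.map_cons, List.prod_cons]
    have hstep : aeval B (C (u l) * X + 1) = 1 + u l • B := by
      rw [map_add, _root_.map_mul, aeval_C, aeval_X, _root_.map_one, add_comm, Algebra.smul_def]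
    rw [Finset.prod_range_succ, _root_.map_mul, hstep]
    have hrest : ((List.range l).reverse.map
        fun k => (1 : Matrix (Fin n) (Fin n) ℝ) + u k • B).prod
        = aeval B (∏ k ∈ Finset.range l, (C (u k) * X + 1)) := ih
    rw [hrest, ← hstep, ← _root_.map_mul, ← _root_.map_mul, mul_comm]


/-- under the near-controllability conditions on `B`, any `ξ` with
`det [ξ, Bξ, …, B^{n-1}ξ] ≠ 0` can be steered to any `η` with
`det [η, Bη, …, B^{n-1}η] ≠ 0`. -/
theorem stmt4 {n : ℕ} (hn : 1 ≤ n) (B : Matrix (Fin n) (Fin n) ℝ)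
    (hdet : B.det ≠ 0) (hcyc : minpoly ℝ B = B.charpoly)
    (hsplit : (B.charpoly.map (RingHom.id ℝ)).Splits)
    (hmult : ∀ μ : ℝ, (minpoly ℝ B).rootMultiplicity μ ≤ 2)
    (ξ η : Fin n → ℝ)
    (hξ : (ctrlMat B ξ).det ≠ 0) (hη : (ctrlMat B η).det ≠ 0) :
    steers B ξ η := by
  have hmo : B.charpoly.Monic := Matrix.charpoly_monic B
  have hmne : B.charpoly ≠ 0 := hmo.ne_zero
  have hmdeg : B.charpoly.natDegree = n := by
    rw [Matrix.charpoly_natDegree_eq_dim, Fintype.card_fin]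
  have hdeg1 : 1 ≤ B.charpoly.natDegree := by omega
  have hmult' : ∀ μ : ℝ, B.charpoly.rootMultiplicity μ ≤ 2 := by
    intro μ
    rw [← hcyc]
    exact hmult μ
  have hm0 : B.charpoly.eval 0 ≠ 0 := by
    intro h
    apply hdet
    rw [Matrix.det_eq_sign_charpoly_coeff, coeff_zero_eq_eval_zero, h, mul_zero]
  have hAdet : IsUnit (ctrlMat B ξ).det := isUnit_iff_ne_zero.mpr hξ
  set a : Fin n → ℝ := (ctrlMat B ξ)⁻¹.mulVec η with ha
  set p : Polynomial ℝ := ∑ j : Fin n, C (a j) * X ^ (j : ℕ) with hp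
  have hpdeg : p.natDegree < n := by
    have h1 : p.natDegree ≤ n - 1 := by
      rw [hp]
      refine natDegree_sum_le_of_forall_le _ _ ?_
      intro j _
      refine le_trans (natDegree_C_mul_le _ _) ?_
      rw [natDegree_X_pow]
      omega
    omega
  have haeval : (Polynomial.aeval B p).mulVec ξ = η := by
    have h1 : Polynomial.aeval B p = ∑ j : Fin n, a j • B ^ (j : ℕ) := by
      rw [hp, map_sum]
      refine Finset.sum_congr rfl (fun j _ => ?_)
      rw [_root_.map_mul, aeval_C, aeval_X_pow, Algebra.smul_def]
    rw [h1]
    have h2 : (∑ j : Fin n, a j • B ^ (j : ℕ)).mulVec ξ = ∑ j : Fin n, a j • ((B ^ (j : ℕ)).mulVec ξ) := by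
      ext i
      simp only [Matrix.mulVec, dotProduct, Matrix.sum_apply, Matrix.smul_apply, smul_eq_mul,
        Finset.sum_apply, Finset.sum_mul, Pi.smul_apply]
      rw [Finset.sum_comm]
      refine Finset.sum_congr rfl (fun j _ => ?_)
      rw [Finset.mul_sum]
      refine Finset.sum_congr rfl (fun k _ => ?_)
      ring
    rw [h2]
    have h3 : ∑ j : Fin n, a j • ((B ^ (j : ℕ)).mulVec ξ) = (ctrlMat B ξ).mulVec a := by
      ext i
      simp only [Matrix.mulVec, dotProduct, ctrlMat, Matrix.of_apply, Pi.smul_apply,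
        Finset.sum_apply, smul_eq_mul]
      refine Finset.sum_congr rfl (fun j _ => ?_)
      ring
    rw [h3, ha, Matrix.mulVec_mulVec, Matrix.mul_nonsing_inv _ hAdet, Matrix.one_mulVec]
  have hcomm : ∀ j : ℕ, Polynomial.aeval B p * B ^ j = B ^ j * Polynomial.aeval B p := by
    intro j
    have hXj : B ^ j = Polynomial.aeval B ((X : Polynomial ℝ) ^ j) := by
      rw [map_pow, aeval_X]
    rw [hXj, ← _root_.map_mul, mul_comm, _root_.map_mul]
  have hctrl_eta : ctrlMat B η = (Polynomial.aeval B p) * ctrlMat B ξ := by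
    ext i j
    calc ctrlMat B η i j = ((B ^ (j : ℕ)).mulVec η) i := rfl
      _ = ((B ^ (j : ℕ)).mulVec ((Polynomial.aeval B p).mulVec ξ)) i := by rw [haeval]
      _ = ((B ^ (j : ℕ) * Polynomial.aeval B p).mulVec ξ) i := by rw [Matrix.mulVec_mulVec]
      _ = ((Polynomial.aeval B p * B ^ (j : ℕ)).mulVec ξ) i := by rw [hcomm]
      _ = ((Polynomial.aeval B p).mulVec ((B ^ (j : ℕ)).mulVec ξ)) i := by rw [Matrix.mulVec_mulVec]
      _ = ((Polynomial.aeval B p) * ctrlMat B ξ) i j := by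
          simp [Matrix.mul_apply, Matrix.mulVec, dotProduct, ctrlMat]
  have hdet_p : (Polynomial.aeval B p).det ≠ 0 := by
    intro h
    apply hη
    rw [hctrl_eta, Matrix.det_mul, h, zero_mul]
  have hproots : ∀ μ ∈ B.charpoly.roots, p.eval μ ≠ 0 := by
    intro μ hμ hp0
    have hev : B.charpoly.eval μ = 0 := (mem_roots hmne).mp hμ
    have hdet0 : (μ • (1 : Matrix (Fin n) (Fin n) ℝ) - B).det = 0 := by
      have heq : B.charpoly.eval μ = (μ • (1 : Matrix (Fin n) (Fin n) ℝ) - B).det := by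
        rw [Matrix.charpoly, show (eval μ : Polynomial ℝ → ℝ) = ⇑(evalRingHom μ) from rfl,
          RingHom.map_det]
        congr 1
        ext i j
        by_cases hij : i = j
        · subst hij
          simp [Matrix.charmatrix_apply_eq, Matrix.one_apply]
        · simp [Matrix.charmatrix_apply_ne _ _ _ hij, Matrix.one_apply, hij]
      rw [← heq]
      exact hev
    obtain ⟨v, hv0, hv⟩ := Matrix.exists_mulVec_eq_zero_iff.mpr hdet0
    have hBv : B.mulVec v = μ • v := by
      have h1 : (μ • (1 : Matrix (Fin n) (Fin n) ℝ)).mulVec v - B.mulVec v = 0 := by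
        rw [← Matrix.sub_mulVec]
        exact hv
      have h2 : (μ • (1 : Matrix (Fin n) (Fin n) ℝ)).mulVec v = μ • v := by
        rw [Matrix.smul_mulVec, Matrix.one_mulVec]
      rw [h2] at h1
      exact (sub_eq_zero.mp h1).symm
    have hqv : ∀ q : Polynomial ℝ, (Polynomial.aeval B q).mulVec v = q.eval μ • v := by
      have hpow : ∀ k : ℕ, (B ^ k).mulVec v = μ ^ k • v := by
        intro k
        induction k with
        | zero => simp
        | succ k ih =>
          rw [pow_succ, ← Matrix.mulVec_mulVec, hBv, Matrix.mulVec_smul, ih, smul_smul,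
            mul_comm, ← pow_succ]
      intro q
      induction q using Polynomial.induction_on' with
      | add f g hf hg => rw [map_add, Matrix.add_mulVec, hf, hg, eval_add, add_smul]
      | monomial k b =>
        rw [aeval_monomial, eval_monomial, ← Algebra.smul_def, Matrix.smul_mulVec,
          hpow, smul_smul]
    have hzero : (Polynomial.aeval B p).mulVec v = 0 := by
      rw [hqv p, hp0, zero_smul]
    apply hv0
    have hinv : ((Polynomial.aeval B p)⁻¹ * (Polynomial.aeval B p)).mulVec v = v := by
      rw [Matrix.nonsing_inv_mul _ (isUnit_iff_ne_zero.mpr hdet_p), Matrix.one_mulVec]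
    rw [← hinv, ← Matrix.mulVec_mulVec, hzero, Matrix.mulVec_zero]
  obtain ⟨d, hd1, u, hdvd⟩ := key_poly B.charpoly p hmo hdeg1 (by rwa [Polynomial.map_id] at hsplit) hm0 hmult'
    (by rw [hmdeg]; exact hpdeg) hproots
  refine ⟨d, hd1, u, ?_⟩
  rw [prodCtrl_eq_aeval B d u]
  obtain ⟨g, hg⟩ := hdvd
  have hqp : (∏ k ∈ Finset.range d, (C (u k) * X + 1)) = p + B.charpoly * g := by
    rw [← hg]; ring
  rw [hqp, map_add, _root_.map_mul, Matrix.aeval_self_charpoly, zero_mul, add_zero, haeval]
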